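/- Let P be a π-stationary transition matrix on the finite product state space X = X^(1) × … × X^(d), where π is of product form, i.e. π = ⊗_{i=1}^d π^(i). Then the map S ↦ D(P^(S) ‖ Π^(S)) on subsets S ⊆ ⟦d⟧ is supermodular. -/

import Mathlib

open scoped Classical

noncomputable section

variable {d : ℕ}

/-- A `k`-tuple of subsets is pairwise disjoint (i.e. it is an element of `(k+1)^U`). -/
def PwDisj {α : Type*} {k : ℕ} (S : Fin k → Finset α) : Prop :=
  ∀ i j : Fin k, i ≠ j → Disjoint (S i) (S j)

/-- Restriction of a global state to the coordinates in `S`. -/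
def restrict (𝒳 : Fin d → Type) (S : Finset (Fin d)) (x : ∀ i, 𝒳 i) :
    ∀ i : S, 𝒳 i.1 := fun i => x i.1

/-- Marginal of `π` on the coordinates in `S`. -/
def marginal (𝒳 : Fin d → Type) [∀ i, Fintype (𝒳 i)]
    (π : (∀ i, 𝒳 i) → ℝ) (S : Finset (Fin d)) (z : ∀ i : S, 𝒳 i.1) : ℝ :=
  ∑ x : ∀ i, 𝒳 i, if restrict 𝒳 S x = z then π x else 0

/-- Keep-`S`-in transition matrix of `P` with respect to `π`. -/
def keepIn (𝒳 : Fin d → Type) [∀ i, Fintype (𝒳 i)]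
    (π : (∀ i, 𝒳 i) → ℝ) (P : (∀ i, 𝒳 i) → (∀ i, 𝒳 i) → ℝ)
    (S : Finset (Fin d)) (z w : ∀ i : S, 𝒳 i.1) : ℝ :=
  (∑ x : ∀ i, 𝒳 i, ∑ y : ∀ i, 𝒳 i,
      if restrict 𝒳 S x = z ∧ restrict 𝒳 S y = w then π x * P x y else 0) /
    marginal 𝒳 π S z

/-- Entropy rate of a transition matrix `M` with respect to `μ`
    (with the convention `0 ln 0 = 0`). -/
def entRate {Y : Type*} [Fintype Y] (μ : Y → ℝ) (M : Y → Y → ℝ) : ℝ :=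
  -∑ x, ∑ y, μ x * M x y * Real.log (M x y)

/-- KL divergence rate from `L` to `M` with respect to `μ`
    (with the convention `0 ln (0/a) = 0`). -/
def klRate {Y : Type*} [Fintype Y] (μ : Y → ℝ) (M L : Y → Y → ℝ) : ℝ :=
  ∑ x, ∑ y, μ x * M x y * Real.log (M x y / L x y)

/-- Keep-`{i}`-in single-coordinate transition matrix `P^(i)`. -/
def single (𝒳 : Fin d → Type) [∀ i, Fintype (𝒳 i)]
    (π : (∀ i, 𝒳 i) → ℝ) (P : (∀ i, 𝒳 i) → (∀ i, 𝒳 i) → ℝ)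
    (i : Fin d) (a b : 𝒳 i) : ℝ :=
  (∑ x : ∀ j, 𝒳 j, ∑ y : ∀ j, 𝒳 j, if x i = a ∧ y i = b then π x * P x y else 0) /
    (∑ x : ∀ j, 𝒳 j, if x i = a then π x else 0)

/-- Tensor product over `S` of the single-coordinate matrices `P^(i)`, `i ∈ S`. -/
def indepKernel (𝒳 : Fin d → Type) [∀ i, Fintype (𝒳 i)]
    (π : (∀ i, 𝒳 i) → ℝ) (P : (∀ i, 𝒳 i) → (∀ i, 𝒳 i) → ℝ)
    (S : Finset (Fin d)) (z w : ∀ i : S, 𝒳 i.1) : ℝ :=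
  ∏ i : S, single 𝒳 π P i.1 (z i) (w i)

/-- Distance to independence `𝕀(P^(S)) = D(P^(S) ‖ ⊗_{i ∈ S} P^(i))`. -/
def distToIndep (𝒳 : Fin d → Type) [∀ i, Fintype (𝒳 i)]
    (π : (∀ i, 𝒳 i) → ℝ) (P : (∀ i, 𝒳 i) → (∀ i, 𝒳 i) → ℝ)
    (S : Finset (Fin d)) : ℝ :=
  klRate (marginal 𝒳 π S) (keepIn 𝒳 π P S) (indepKernel 𝒳 π P S)

/-- Entropy rate `H(P^(S))` of the keep-`S`-in transition matrix. -/
def entKeepIn (𝒳 : Fin d → Type) [∀ i, Fintype (𝒳 i)]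
    (π : (∀ i, 𝒳 i) → ℝ) (P : (∀ i, 𝒳 i) → (∀ i, 𝒳 i) → ℝ)
    (S : Finset (Fin d)) : ℝ :=
  entRate (marginal 𝒳 π S) (keepIn 𝒳 π P S)

/-- Distance to stationarity `D(P^(S) ‖ Π^(S))`, where every row of `Π^(S)` is `π^(S)`. -/
def distToStat (𝒳 : Fin d → Type) [∀ i, Fintype (𝒳 i)]
    (π : (∀ i, 𝒳 i) → ℝ) (P : (∀ i, 𝒳 i) → (∀ i, 𝒳 i) → ℝ)
    (S : Finset (Fin d)) : ℝ :=
  klRate (marginal 𝒳 π S) (keepIn 𝒳 π P S) (fun _ w => marginal 𝒳 π S w)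

/-- Single-coordinate marginal `π^(i)`. -/
def singleMarginal (𝒳 : Fin d → Type) [∀ i, Fintype (𝒳 i)]
    (π : (∀ i, 𝒳 i) → ℝ) (i : Fin d) (a : 𝒳 i) : ℝ :=
  ∑ x : ∀ j, 𝒳 j, if x i = a then π x else 0


section Helpers

variable {ι : Type*} [Fintype ι]

lemma ite_forall_prod (c : ι → Prop) (g : ι → ℝ) :
    (if (∀ i, c i) then ∏ i, g i else 0) = ∏ i, (if c i then g i else 0) := by
  by_cases h : ∀ i, c i
  · rw [if_pos h]
    exact Finset.prod_congr rfl fun i _ => (if_pos (h i)).symm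
  · rw [if_neg h]
    push_neg at h
    obtain ⟨i0, hi0⟩ := h
    symm
    apply Finset.prod_eq_zero (Finset.mem_univ i0)
    rw [if_neg hi0]

end Helpers

section Core

variable {d : ℕ} (𝒴 : Fin d → Type) [∀ i, Fintype (𝒴 i)]

/-- agreement on a set of coordinates -/
def Agr (A : Finset (Fin d)) (v w : ∀ i, 𝒴 i) : Prop := ∀ i ∈ A, v i = w i

lemma Agr_refl (A : Finset (Fin d)) (v : ∀ i, 𝒴 i) : Agr 𝒴 A v v := fun _ _ => rfl

lemma Agr_mono {A B : Finset (Fin d)} (h : A ⊆ B) {v w : ∀ i, 𝒴 i}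
    (hvw : Agr 𝒴 B v w) : Agr 𝒴 A v w := fun i hi => hvw i (h hi)

/-- marginal mass function on coordinates in `A`, as a function on the full space -/
def MM (Q : (∀ i, 𝒴 i) → ℝ) (A : Finset (Fin d)) (v : ∀ i, 𝒴 i) : ℝ :=
  ∑ w, if Agr 𝒴 A w v then Q w else 0

/-- number of elements agreeing with a given one on `A` -/
def cnt (A : Finset (Fin d)) : ℝ := ∏ i, if i ∈ A then 1 else (Fintype.card (𝒴 i) : ℝ)

variable (Q : (∀ i, 𝒴 i) → ℝ)

lemma MM_nonneg (hQ : ∀ v, 0 ≤ Q v) (A : Finset (Fin d)) (v : ∀ i, 𝒴 i) :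
    0 ≤ MM 𝒴 Q A v :=
  Finset.sum_nonneg fun w _ => by by_cases h : Agr 𝒴 A w v <;> simp [h, hQ w]

lemma le_MM (hQ : ∀ v, 0 ≤ Q v) (A : Finset (Fin d)) (v : ∀ i, 𝒴 i) :
    Q v ≤ MM 𝒴 Q A v := by
  have := Finset.single_le_sum (f := fun w => if Agr 𝒴 A w v then Q w else 0)
    (fun w _ => by by_cases h : Agr 𝒴 A w v <;> simp [h, hQ w]) (Finset.mem_univ v)
  simpa [Agr_refl, MM] using this

lemma MM_anti (hQ : ∀ v, 0 ≤ Q v) {A B : Finset (Fin d)} (h : A ⊆ B) (v : ∀ i, 𝒴 i) :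
    MM 𝒴 Q B v ≤ MM 𝒴 Q A v := by
  apply Finset.sum_le_sum
  intro w _
  by_cases hB : Agr 𝒴 B w v
  · rw [if_pos hB, if_pos (Agr_mono 𝒴 h hB)]
  · rw [if_neg hB]
    by_cases hA : Agr 𝒴 A w v <;> simp [hA, hQ w]

lemma MM_congr {A : Finset (Fin d)} {v w : ∀ i, 𝒴 i} (h : Agr 𝒴 A v w) :
    MM 𝒴 Q A v = MM 𝒴 Q A w := by
  apply Finset.sum_congr rfl
  intro u _
  have : Agr 𝒴 A u v ↔ Agr 𝒴 A u w := by
    constructor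
    · intro h' i hi; rw [h' i hi, h i hi]
    · intro h' i hi; rw [h' i hi, ← h i hi]
  by_cases hc : Agr 𝒴 A u v
  · rw [if_pos hc, if_pos (this.1 hc)]
  · rw [if_neg hc, if_neg (fun hh => hc (this.2 hh))]

lemma cnt_nonneg (A : Finset (Fin d)) : 0 ≤ cnt 𝒴 A :=
  Finset.prod_nonneg fun i _ => by by_cases h : i ∈ A <;> simp [h, cnt]

lemma cnt_pos [∀ i, Nonempty (𝒴 i)] (A : Finset (Fin d)) : 0 < cnt 𝒴 A :=
  Finset.prod_pos fun i _ => by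
    by_cases h : i ∈ A <;> simp [h]
    exact_mod_cast Fintype.card_pos

lemma count_agr (A : Finset (Fin d)) (w : ∀ i, 𝒴 i) :
    ∑ v, (if Agr 𝒴 A w v then (1 : ℝ) else 0) = cnt 𝒴 A := by
  have step : ∀ v : ∀ i, 𝒴 i, (if Agr 𝒴 A w v then (1 : ℝ) else 0)
      = ∏ i, (if (i ∈ A → w i = v i) then (1 : ℝ) else 0) := by
    intro v
    by_cases h : Agr 𝒴 A w v
    · rw [if_pos h]
      symm
      apply Finset.prod_eq_one
      intro i _
      exact if_pos (fun hi => h i hi)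
    · rw [if_neg h]
      simp only [Agr] at h
      push_neg at h
      obtain ⟨i0, hi0, hne⟩ := h
      symm
      exact Finset.prod_eq_zero (Finset.mem_univ i0) (if_neg (fun hc => hne (hc hi0)))
  simp_rw [step]
  rw [← Fintype.prod_sum (fun i a => if (i ∈ A → w i = a) then (1 : ℝ) else 0)]
  apply Finset.prod_congr rfl
  intro i _
  by_cases h : i ∈ A <;> simp [h, cnt, Finset.card_univ]

end Core

section Core2

variable {d : ℕ} (𝒴 : Fin d → Type) [∀ i, Fintype (𝒴 i)] (Q : (∀ i, 𝒴 i) → ℝ)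

lemma collapse (U : Finset (Fin d)) (F : (∀ i, 𝒴 i) → ℝ)
    (hF : ∀ v w, Agr 𝒴 U v w → F v = F w) :
    ∑ v, MM 𝒴 Q U v * F v = cnt 𝒴 U * ∑ v, Q v * F v := by
  simp only [MM, Finset.sum_mul]
  rw [Finset.sum_comm]
  have step : ∀ w v : ∀ i, 𝒴 i,
      (if Agr 𝒴 U w v then Q w else 0) * F v
        = (Q w * F w) * (if Agr 𝒴 U w v then (1 : ℝ) else 0) := by
    intro w v
    by_cases h : Agr 𝒴 U w v
    · rw [if_pos h, if_pos h, hF w v h]; ring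
    · simp [h]
  simp_rw [step, ← Finset.mul_sum, count_agr]
  rw [Finset.mul_sum]
  apply Finset.sum_congr rfl
  intro w _
  ring

lemma key6 (S T : Finset (Fin d)) (w : ∀ i, 𝒴 i) :
    ∑ v, (if Agr 𝒴 T w v then MM 𝒴 Q S v else 0)
      = cnt 𝒴 (S ∪ T) * MM 𝒴 Q (S ∩ T) w := by
  have expand : ∀ v, (if Agr 𝒴 T w v then MM 𝒴 Q S v else 0)
      = ∑ u, (if Agr 𝒴 T w v ∧ Agr 𝒴 S u v then Q u else 0) := by
    intro v
    by_cases h : Agr 𝒴 T w v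
    · rw [if_pos h, MM]
      apply Finset.sum_congr rfl
      intro u _
      by_cases h2 : Agr 𝒴 S u v
      · rw [if_pos h2, if_pos ⟨h, h2⟩]
      · rw [if_neg h2, if_neg (fun hh => h2 hh.2)]
    · rw [if_neg h]
      symm
      apply Finset.sum_eq_zero
      intro u _
      exact if_neg (fun hh => h hh.1)
  simp_rw [expand]
  rw [Finset.sum_comm]
  -- inner count for fixed u
  have inner : ∀ u, ∑ v, (if Agr 𝒴 T w v ∧ Agr 𝒴 S u v then Q u else 0)
      = Q u * (if Agr 𝒴 (S ∩ T) u w then cnt 𝒴 (S ∪ T) else 0) := by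
    intro u
    have step : ∀ v, (if Agr 𝒴 T w v ∧ Agr 𝒴 S u v then Q u else 0)
        = Q u * ∏ i, (if ((i ∈ T → w i = v i) ∧ (i ∈ S → u i = v i)) then (1 : ℝ) else 0) := by
      intro v
      by_cases h : Agr 𝒴 T w v ∧ Agr 𝒴 S u v
      · rw [if_pos h]
        have : ∀ i : Fin d, ((i ∈ T → w i = v i) ∧ (i ∈ S → u i = v i)) :=
          fun i => ⟨fun hi => h.1 i hi, fun hi => h.2 i hi⟩
        rw [Finset.prod_eq_one (fun i _ => if_pos (this i)), mul_one]
      · rw [if_neg h]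
        have : ¬ ∀ i : Fin d, ((i ∈ T → w i = v i) ∧ (i ∈ S → u i = v i)) := by
          intro hall
          exact h ⟨fun i hi => (hall i).1 hi, fun i hi => (hall i).2 hi⟩
        rw [not_forall] at this
        obtain ⟨i0, hi0⟩ := this
        have hz : (∏ i, if ((i ∈ T → w i = v i) ∧ (i ∈ S → u i = v i)) then (1 : ℝ) else 0) = 0 :=
          Finset.prod_eq_zero (Finset.mem_univ i0) (if_neg hi0)
        rw [hz, mul_zero]
    simp_rw [step, ← Finset.mul_sum]
    congr 1
    rw [← Fintype.prod_sum
      (fun i a => if ((i ∈ T → w i = a) ∧ (i ∈ S → u i = a)) then (1 : ℝ) else 0)]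
    have factor : ∀ i : Fin d,
        (∑ a : 𝒴 i, if ((i ∈ T → w i = a) ∧ (i ∈ S → u i = a)) then (1 : ℝ) else 0)
          = (if (i ∈ S ∩ T → u i = w i) then
              (if i ∈ S ∪ T then 1 else (Fintype.card (𝒴 i) : ℝ)) else 0) := by
      intro i
      by_cases hS : i ∈ S <;> by_cases hT : i ∈ T
      · -- both
        by_cases he : u i = w i
        · simp [hS, hT, he, Finset.mem_inter, Finset.mem_union]
        · have hall : ∀ a : 𝒴 i, (if ((i ∈ T → w i = a) ∧ (i ∈ S → u i = a)) then (1 : ℝ) else 0) = 0 := by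
            intro a
            apply if_neg
            rintro ⟨h1, h2⟩
            exact he ((h2 hS).trans (h1 hT).symm)
          rw [Finset.sum_congr rfl (fun a _ => hall a), Finset.sum_const, smul_zero,
            if_neg (fun hc => he (hc (Finset.mem_inter.mpr ⟨hS, hT⟩)))]
      · simp [hS, hT, Finset.mem_inter, Finset.mem_union]
      · simp [hS, hT, Finset.mem_inter, Finset.mem_union]
      · simp [hS, hT, Finset.mem_inter, Finset.mem_union, Finset.card_univ]
    simp_rw [factor]
    by_cases hA : Agr 𝒴 (S ∩ T) u w
    · rw [if_pos hA]
      simp only [cnt]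
      apply Finset.prod_congr rfl
      intro i _
      rw [if_pos (fun hi => hA i hi)]
    · rw [if_neg hA]
      simp only [Agr, not_forall] at hA
      obtain ⟨i0, hi0, hne⟩ := hA
      exact Finset.prod_eq_zero (Finset.mem_univ i0) (if_neg (fun hc => hne (hc hi0)))
  simp_rw [inner]
  rw [MM, Finset.mul_sum]
  apply Finset.sum_congr rfl
  intro u _
  by_cases h : Agr 𝒴 (S ∩ T) u w <;> simp [h] <;> ring

end Core2
section Core3

variable {d : ℕ} (𝒴 : Fin d → Type) [∀ i, Fintype (𝒴 i)] [∀ i, Nonempty (𝒴 i)]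

theorem core_ineq (Q : (∀ i, 𝒴 i) → ℝ) (hQ : ∀ v, 0 ≤ Q v) (S T : Finset (Fin d)) :
    (∑ v, Q v * Real.log (MM 𝒴 Q S v)) + (∑ v, Q v * Real.log (MM 𝒴 Q T v)) ≤
    (∑ v, Q v * Real.log (MM 𝒴 Q (S ∩ T) v)) + (∑ v, Q v * Real.log (MM 𝒴 Q (S ∪ T) v)) := by
  set U := S ∪ T with hU
  set I := S ∩ T with hI
  set W : (∀ i, 𝒴 i) → ℝ := fun v =>
    if 0 < MM 𝒴 Q U v then MM 𝒴 Q S v * MM 𝒴 Q T v / (MM 𝒴 Q U v * MM 𝒴 Q I v) else 0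
    with hW
  have hSU : S ⊆ U := Finset.subset_union_left
  have hTU : T ⊆ U := Finset.subset_union_right
  have hIS : I ⊆ S := Finset.inter_subset_left
  have hIT : I ⊆ T := Finset.inter_subset_right
  have hIU : I ⊆ U := hIS.trans hSU
  -- Step 1 : pointwise bound
  have h1 : ∀ v, Q v * Real.log (MM 𝒴 Q S v) + Q v * Real.log (MM 𝒴 Q T v)
      - Q v * Real.log (MM 𝒴 Q I v) - Q v * Real.log (MM 𝒴 Q U v)
      ≤ Q v * W v - Q v := by
    intro v
    rcases eq_or_lt_of_le (hQ v) with hv | hv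
    · rw [← hv]; simp
    · have hMU : 0 < MM 𝒴 Q U v := lt_of_lt_of_le hv (le_MM 𝒴 Q hQ U v)
      have hMS : 0 < MM 𝒴 Q S v := lt_of_lt_of_le hMU (MM_anti 𝒴 Q hQ hSU v)
      have hMT : 0 < MM 𝒴 Q T v := lt_of_lt_of_le hMU (MM_anti 𝒴 Q hQ hTU v)
      have hMI : 0 < MM 𝒴 Q I v := lt_of_lt_of_le hMU (MM_anti 𝒴 Q hQ hIU v)
      have hx : 0 < MM 𝒴 Q S v * MM 𝒴 Q T v / (MM 𝒴 Q U v * MM 𝒴 Q I v) :=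
        div_pos (mul_pos hMS hMT) (mul_pos hMU hMI)
      have hWv : W v = MM 𝒴 Q S v * MM 𝒴 Q T v / (MM 𝒴 Q U v * MM 𝒴 Q I v) := if_pos hMU
      have hlog : Real.log (MM 𝒴 Q S v * MM 𝒴 Q T v / (MM 𝒴 Q U v * MM 𝒴 Q I v))
          = Real.log (MM 𝒴 Q S v) + Real.log (MM 𝒴 Q T v)
            - Real.log (MM 𝒴 Q U v) - Real.log (MM 𝒴 Q I v) := by
        rw [Real.log_div (by positivity) (by positivity),
          Real.log_mul hMS.ne' hMT.ne', Real.log_mul hMU.ne' hMI.ne']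
        ring
      have hle := Real.log_le_sub_one_of_pos hx
      calc Q v * Real.log (MM 𝒴 Q S v) + Q v * Real.log (MM 𝒴 Q T v)
            - Q v * Real.log (MM 𝒴 Q I v) - Q v * Real.log (MM 𝒴 Q U v)
          = Q v * Real.log (MM 𝒴 Q S v * MM 𝒴 Q T v / (MM 𝒴 Q U v * MM 𝒴 Q I v)) := by
            rw [hlog]; ring
        _ ≤ Q v * (MM 𝒴 Q S v * MM 𝒴 Q T v / (MM 𝒴 Q U v * MM 𝒴 Q I v) - 1) :=
            mul_le_mul_of_nonneg_left hle (le_of_lt hv)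
        _ = Q v * W v - Q v := by rw [hWv]; ring
  -- Step 2 : W is U-invariant
  have hWinv : ∀ v w, Agr 𝒴 U v w → W v = W w := by
    intro v w h
    have eS : MM 𝒴 Q S v = MM 𝒴 Q S w := MM_congr 𝒴 Q (Agr_mono 𝒴 hSU h)
    have eT : MM 𝒴 Q T v = MM 𝒴 Q T w := MM_congr 𝒴 Q (Agr_mono 𝒴 hTU h)
    have eU : MM 𝒴 Q U v = MM 𝒴 Q U w := MM_congr 𝒴 Q h
    have eI : MM 𝒴 Q I v = MM 𝒴 Q I w := MM_congr 𝒴 Q (Agr_mono 𝒴 hIU h)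
    rw [hW]
    simp only [eS, eT, eU, eI]
  have hcol : ∑ v, MM 𝒴 Q U v * W v = cnt 𝒴 U * ∑ v, Q v * W v :=
    collapse 𝒴 Q U W hWinv
  -- Step 3
  have h3 : ∑ v, MM 𝒴 Q U v * W v
      = ∑ v, (if 0 < MM 𝒴 Q U v then MM 𝒴 Q S v * MM 𝒴 Q T v / MM 𝒴 Q I v else 0) := by
    apply Finset.sum_congr rfl
    intro v _
    by_cases h : 0 < MM 𝒴 Q U v
    · have hMI : 0 < MM 𝒴 Q I v := lt_of_lt_of_le h (MM_anti 𝒴 Q hQ hIU v)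
      rw [hW]
      simp only [if_pos h]
      field_simp
    · have h0 : MM 𝒴 Q U v = 0 := le_antisymm (not_lt.1 h) (MM_nonneg 𝒴 Q hQ U v)
      rw [if_neg h, h0, zero_mul]
  -- Step 4
  have h4 : ∑ v, (if 0 < MM 𝒴 Q U v then MM 𝒴 Q S v * MM 𝒴 Q T v / MM 𝒴 Q I v else 0)
      ≤ cnt 𝒴 U * ∑ v, Q v := by
    set g : (∀ i, 𝒴 i) → ℝ := fun v =>
      if 0 < MM 𝒴 Q U v then MM 𝒴 Q S v / MM 𝒴 Q I v else 0 with hg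
    have e1 : ∀ v, (if 0 < MM 𝒴 Q U v then MM 𝒴 Q S v * MM 𝒴 Q T v / MM 𝒴 Q I v else 0)
        = g v * MM 𝒴 Q T v := by
      intro v
      rw [hg]
      by_cases h : 0 < MM 𝒴 Q U v <;> simp [h] <;> ring
    simp_rw [e1]
    have e2 : ∀ v, g v * MM 𝒴 Q T v = ∑ u, (if Agr 𝒴 T u v then g v * Q u else 0) := by
      intro v
      rw [MM, Finset.mul_sum]
      apply Finset.sum_congr rfl
      intro u _
      by_cases h : Agr 𝒴 T u v <;> simp [h]
    simp_rw [e2]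
    rw [Finset.sum_comm]
    have hbound : ∀ u, ∑ v, (if Agr 𝒴 T u v then g v * Q u else 0) ≤ Q u * cnt 𝒴 U := by
      intro u
      have inner : ∑ v, (if Agr 𝒴 T u v then g v else 0) ≤ cnt 𝒴 U := by
        by_cases hIu : 0 < MM 𝒴 Q I u
        · have hle : ∀ v, (if Agr 𝒴 T u v then g v else 0)
              ≤ (if Agr 𝒴 T u v then MM 𝒴 Q S v else 0) / MM 𝒴 Q I u := by
            intro v
            by_cases h : Agr 𝒴 T u v
            · rw [if_pos h, if_pos h, hg]
              have eI : MM 𝒴 Q I v = MM 𝒴 Q I u :=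
                (MM_congr 𝒴 Q (Agr_mono 𝒴 hIT h)).symm
              by_cases hU' : 0 < MM 𝒴 Q U v
              · simp only [if_pos hU', eI]
                exact le_rfl
              · simp only [if_neg hU']
                exact div_nonneg (MM_nonneg 𝒴 Q hQ S v) (le_of_lt hIu)
            · rw [if_neg h, if_neg h, zero_div]
          calc ∑ v, (if Agr 𝒴 T u v then g v else 0)
              ≤ ∑ v, (if Agr 𝒴 T u v then MM 𝒴 Q S v else 0) / MM 𝒴 Q I u :=
                Finset.sum_le_sum fun v _ => hle v
            _ = (∑ v, (if Agr 𝒴 T u v then MM 𝒴 Q S v else 0)) / MM 𝒴 Q I u := by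
                rw [Finset.sum_div]
            _ = cnt 𝒴 U * MM 𝒴 Q I u / MM 𝒴 Q I u := by rw [key6]
            _ = cnt 𝒴 U := by field_simp
        · have hz : ∀ v, (if Agr 𝒴 T u v then g v else 0) = 0 := by
            intro v
            by_cases h : Agr 𝒴 T u v
            · rw [if_pos h, hg]
              have eI : MM 𝒴 Q I v = MM 𝒴 Q I u :=
                (MM_congr 𝒴 Q (Agr_mono 𝒴 hIT h)).symm
              have : ¬ 0 < MM 𝒴 Q U v := by
                intro hc
                exact hIu (lt_of_lt_of_le hc (eI ▸ MM_anti 𝒴 Q hQ hIU v))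
              simp [this]
            · rw [if_neg h]
          rw [Finset.sum_congr rfl (fun v _ => hz v), Finset.sum_const, smul_zero]
          exact cnt_nonneg 𝒴 U
      calc ∑ v, (if Agr 𝒴 T u v then g v * Q u else 0)
          = Q u * ∑ v, (if Agr 𝒴 T u v then g v else 0) := by
            rw [Finset.mul_sum]
            apply Finset.sum_congr rfl
            intro v _
            by_cases h : Agr 𝒴 T u v <;> simp [h] <;> ring
        _ ≤ Q u * cnt 𝒴 U := mul_le_mul_of_nonneg_left inner (hQ u)
    calc ∑ u, ∑ v, (if Agr 𝒴 T u v then g v * Q u else 0)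
        ≤ ∑ u, Q u * cnt 𝒴 U := Finset.sum_le_sum fun u _ => hbound u
      _ = cnt 𝒴 U * ∑ u, Q u := by rw [← Finset.sum_mul, mul_comm]
  -- Step 5 : combine
  have hc : 0 < cnt 𝒴 U := cnt_pos 𝒴 U
  have h5 : cnt 𝒴 U * ∑ v, Q v * W v ≤ cnt 𝒴 U * ∑ v, Q v := by
    rw [← hcol, h3]; exact h4
  have h5' : ∑ v, Q v * W v ≤ ∑ v, Q v := le_of_mul_le_mul_left h5 hc
  have hsum := Finset.sum_le_sum (fun v (_ : v ∈ (Finset.univ : Finset (∀ i, 𝒴 i))) => h1 v)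
  simp only [Finset.sum_sub_distrib, Finset.sum_add_distrib] at hsum
  linarith

end Core3
section App

variable {d : ℕ} (𝒳 : Fin d → Type) [∀ i, Fintype (𝒳 i)] [∀ i, Nonempty (𝒳 i)]

/-- Full-space version of the marginal of `π`. -/
def PiM (π : (∀ i, 𝒳 i) → ℝ) (S : Finset (Fin d)) (x : ∀ i, 𝒳 i) : ℝ :=
  ∑ x', if (∀ i ∈ S, x' i = x i) then π x' else 0

/-- The joint mass on pairs, as a mass function on the product of pair spaces. -/
def QQ (π : (∀ i, 𝒳 i) → ℝ) (P : (∀ i, 𝒳 i) → (∀ i, 𝒳 i) → ℝ) :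
    (∀ i, 𝒳 i × 𝒳 i) → ℝ :=
  fun v => π (fun i => (v i).1) * P (fun i => (v i).1) (fun i => (v i).2)

def pairFun (x y : ∀ i, 𝒳 i) : ∀ i, 𝒳 i × 𝒳 i := fun i => (x i, y i)

def pairPi : ((∀ i, 𝒳 i) × (∀ i, 𝒳 i)) ≃ (∀ i, 𝒳 i × 𝒳 i) where
  toFun p := fun i => (p.1 i, p.2 i)
  invFun v := (fun i => (v i).1, fun i => (v i).2)
  left_inv p := rfl
  right_inv v := rfl

lemma sum_pair (f : (∀ i, 𝒳 i × 𝒳 i) → ℝ) :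
    ∑ v, f v = ∑ x, ∑ y, f (pairFun 𝒳 x y) := by
  rw [← Equiv.sum_comp (pairPi 𝒳) f, Fintype.sum_prod_type]
  rfl

lemma restrict_eq_iff (S : Finset (Fin d)) (x' x : ∀ i, 𝒳 i) :
    restrict 𝒳 S x' = restrict 𝒳 S x ↔ ∀ i ∈ S, x' i = x i := by
  constructor
  · intro h i hi
    exact congrFun h ⟨i, hi⟩
  · intro h
    funext i
    exact h i.1 i.2

lemma marginal_restrict (π : (∀ i, 𝒳 i) → ℝ) (S : Finset (Fin d)) (x : ∀ i, 𝒳 i) :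
    marginal 𝒳 π S (restrict 𝒳 S x) = PiM 𝒳 π S x :=
  Finset.sum_congr rfl fun x' _ => if_congr (restrict_eq_iff 𝒳 S x' x) rfl rfl

/-- a lift of a partial configuration -/
def liftc (S : Finset (Fin d)) (z : ∀ i : S, 𝒳 i.1) : ∀ i, 𝒳 i :=
  fun i => if h : i ∈ S then z ⟨i, h⟩ else Classical.arbitrary (𝒳 i)

lemma restrict_liftc (S : Finset (Fin d)) (z : ∀ i : S, 𝒳 i.1) :
    restrict 𝒳 S (liftc 𝒳 S z) = z :=
  funext fun i => dif_pos i.2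

lemma PiM_pos (π : (∀ i, 𝒳 i) → ℝ) (hπpos : ∀ x, 0 < π x) (S : Finset (Fin d))
    (x : ∀ i, 𝒳 i) : 0 < PiM 𝒳 π S x := by
  have hterm : ∀ x' : ∀ i, 𝒳 i, 0 ≤ if (∀ i ∈ S, x' i = x i) then π x' else 0 := by
    intro x'
    by_cases h : ∀ i ∈ S, x' i = x i
    · rw [if_pos h]; exact (hπpos x').le
    · rw [if_neg h]
  have h := Finset.single_le_sum (f := fun x' => if (∀ i ∈ S, x' i = x i) then π x' else 0)
    (fun x' _ => hterm x') (Finset.mem_univ x)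
  simp only at h
  rw [if_pos (fun (i : Fin d) (_ : i ∈ S) => trivial)] at h
  exact lt_of_lt_of_le (hπpos x) h

lemma marginal_pos (π : (∀ i, 𝒳 i) → ℝ) (hπpos : ∀ x, 0 < π x) (S : Finset (Fin d))
    (z : ∀ i : S, 𝒳 i.1) : 0 < marginal 𝒳 π S z := by
  rw [← restrict_liftc 𝒳 S z, marginal_restrict]
  exact PiM_pos 𝒳 π hπpos S _

lemma sm_sum (π : (∀ i, 𝒳 i) → ℝ) (hπsum : ∑ x, π x = 1) (i : Fin d) :
    ∑ a, singleMarginal 𝒳 π i a = 1 := by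
  simp only [singleMarginal]
  rw [Finset.sum_comm]
  calc ∑ x, ∑ a, (if x i = a then π x else 0) = ∑ x, π x := by
        apply Finset.sum_congr rfl
        intro x _
        simp
    _ = 1 := hπsum

lemma sm_pos (π : (∀ i, 𝒳 i) → ℝ) (hπpos : ∀ x, 0 < π x) (i : Fin d) (a : 𝒳 i) :
    0 < singleMarginal 𝒳 π i a := by
  set x0 : ∀ j, 𝒳 j := Function.update (Classical.arbitrary _) i a with hx0
  have hx0i : x0 i = a := Function.update_self i a _
  have hterm : ∀ x : ∀ j, 𝒳 j, 0 ≤ if x i = a then π x else 0 := by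
    intro x
    by_cases h : x i = a
    · rw [if_pos h]; exact (hπpos x).le
    · rw [if_neg h]
  have h := Finset.single_le_sum (f := fun x => if x i = a then π x else 0)
    (fun x _ => hterm x) (Finset.mem_univ x0)
  simp only [hx0i, if_true] at h
  exact lt_of_lt_of_le (hπpos x0) h

lemma PiM_prod (π : (∀ i, 𝒳 i) → ℝ) (hπsum : ∑ x, π x = 1)
    (hprod : ∀ x : ∀ i, 𝒳 i, π x = ∏ i, singleMarginal 𝒳 π i (x i))
    (S : Finset (Fin d)) (x : ∀ i, 𝒳 i) :
    PiM 𝒳 π S x = ∏ i ∈ S, singleMarginal 𝒳 π i (x i) := by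
  rw [PiM]
  have step : ∀ x' : ∀ i, 𝒳 i, (if (∀ i ∈ S, x' i = x i) then π x' else 0)
      = ∏ j, (if (j ∈ S → x' j = x j) then singleMarginal 𝒳 π j (x' j) else 0) := by
    intro x'
    rw [hprod x']
    by_cases h : ∀ i ∈ S, x' i = x i
    · rw [if_pos h]
      exact Finset.prod_congr rfl fun j _ => (if_pos (fun hj => h j hj)).symm
    · rw [if_neg h]
      have h' : ¬ ∀ j, (j ∈ S → x' j = x j) := h
      rw [not_forall] at h'
      obtain ⟨j0, hj0⟩ := h'
      symm
      apply Finset.prod_eq_zero (Finset.mem_univ j0)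
      rw [if_neg hj0]
  simp_rw [step]
  rw [← Fintype.prod_sum (fun j a => if (j ∈ S → a = x j) then singleMarginal 𝒳 π j a else 0)]
  have factor : ∀ j : Fin d,
      (∑ a, if (j ∈ S → a = x j) then singleMarginal 𝒳 π j a else 0)
        = (if j ∈ S then singleMarginal 𝒳 π j (x j) else 1) := by
    intro j
    by_cases hj : j ∈ S
    · simp [hj]
    · simp [hj, sm_sum 𝒳 π hπsum j]
  simp_rw [factor]
  rw [Finset.prod_ite_mem, Finset.univ_inter]

lemma push1 {α β : Type*} [Fintype α] [Fintype β] (φ : α → β) (h : α → ℝ) (G : β → ℝ) :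
    ∑ b, (∑ a, if φ a = b then h a else 0) * G b = ∑ a, h a * G (φ a) := by
  simp_rw [Finset.sum_mul, ite_mul, zero_mul]
  rw [Finset.sum_comm]
  apply Finset.sum_congr rfl
  intro a _
  simp

lemma push (π : (∀ i, 𝒳 i) → ℝ) (P : (∀ i, 𝒳 i) → (∀ i, 𝒳 i) → ℝ) (S : Finset (Fin d))
    (G : (∀ i : S, 𝒳 i.1) → (∀ i : S, 𝒳 i.1) → ℝ) :
    ∑ z : ∀ i : S, 𝒳 i.1, ∑ w : ∀ i : S, 𝒳 i.1,
      (∑ x, ∑ y, if restrict 𝒳 S x = z ∧ restrict 𝒳 S y = w then π x * P x y else 0) * G z w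
      = ∑ x, ∑ y, π x * P x y * G (restrict 𝒳 S x) (restrict 𝒳 S y) := by
  have key := push1 (φ := fun p : (∀ i, 𝒳 i) × (∀ i, 𝒳 i) =>
      ((restrict 𝒳 S p.1, restrict 𝒳 S p.2) : (∀ i : S, 𝒳 i.1) × (∀ i : S, 𝒳 i.1)))
    (h := fun p => π p.1 * P p.1 p.2) (G := fun q => G q.1 q.2)
  rw [Fintype.sum_prod_type] at key
  simp_rw [Fintype.sum_prod_type, Prod.mk.injEq] at key
  exact key

end App
section App2

variable {d : ℕ} (𝒳 : Fin d → Type) [∀ i, Fintype (𝒳 i)] [∀ i, Nonempty (𝒳 i)]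

/-- joint pair marginal, on the quotient spaces -/
def mS (π : (∀ i, 𝒳 i) → ℝ) (P : (∀ i, 𝒳 i) → (∀ i, 𝒳 i) → ℝ) (S : Finset (Fin d))
    (z w : ∀ i : S, 𝒳 i.1) : ℝ :=
  ∑ x, ∑ y, if restrict 𝒳 S x = z ∧ restrict 𝒳 S y = w then π x * P x y else 0

lemma keepIn_eq (π : (∀ i, 𝒳 i) → ℝ) (P : (∀ i, 𝒳 i) → (∀ i, 𝒳 i) → ℝ)
    (S : Finset (Fin d)) (z w : ∀ i : S, 𝒳 i.1) :
    keepIn 𝒳 π P S z w = mS 𝒳 π P S z w / marginal 𝒳 π S z := rfl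

lemma mS_nonneg (π : (∀ i, 𝒳 i) → ℝ) (P : (∀ i, 𝒳 i) → (∀ i, 𝒳 i) → ℝ)
    (hπpos : ∀ x, 0 < π x) (hPnonneg : ∀ x y, 0 ≤ P x y) (S : Finset (Fin d))
    (z w : ∀ i : S, 𝒳 i.1) : 0 ≤ mS 𝒳 π P S z w := by
  apply Finset.sum_nonneg
  intro x _
  apply Finset.sum_nonneg
  intro y _
  by_cases h : restrict 𝒳 S x = z ∧ restrict 𝒳 S y = w
  · rw [if_pos h]; exact mul_nonneg (hπpos x).le (hPnonneg x y)
  · rw [if_neg h]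

lemma MM_pair (π : (∀ i, 𝒳 i) → ℝ) (P : (∀ i, 𝒳 i) → (∀ i, 𝒳 i) → ℝ)
    (S : Finset (Fin d)) (x y : ∀ i, 𝒳 i) :
    MM (fun i => 𝒳 i × 𝒳 i) (QQ 𝒳 π P) S (pairFun 𝒳 x y)
      = ∑ x', ∑ y', if ((∀ i ∈ S, x' i = x i) ∧ (∀ i ∈ S, y' i = y i))
          then π x' * P x' y' else 0 := by
  rw [MM, sum_pair 𝒳 (fun v =>
    if Agr (fun i => 𝒳 i × 𝒳 i) S v (pairFun 𝒳 x y) then QQ 𝒳 π P v else 0)]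
  apply Finset.sum_congr rfl
  intro x' _
  apply Finset.sum_congr rfl
  intro y' _
  have hiff : Agr (fun i => 𝒳 i × 𝒳 i) S (pairFun 𝒳 x' y') (pairFun 𝒳 x y)
      ↔ ((∀ i ∈ S, x' i = x i) ∧ (∀ i ∈ S, y' i = y i)) := by
    constructor
    · intro h
      exact ⟨fun i hi => congrArg Prod.fst (h i hi), fun i hi => congrArg Prod.snd (h i hi)⟩
    · rintro ⟨h1, h2⟩ i hi
      show (x' i, y' i) = (x i, y i)
      rw [h1 i hi, h2 i hi]
  exact if_congr hiff rfl rfl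

lemma mS_restrict (π : (∀ i, 𝒳 i) → ℝ) (P : (∀ i, 𝒳 i) → (∀ i, 𝒳 i) → ℝ)
    (S : Finset (Fin d)) (x y : ∀ i, 𝒳 i) :
    mS 𝒳 π P S (restrict 𝒳 S x) (restrict 𝒳 S y)
      = MM (fun i => 𝒳 i × 𝒳 i) (QQ 𝒳 π P) S (pairFun 𝒳 x y) := by
  rw [MM_pair]
  apply Finset.sum_congr rfl
  intro x' _
  apply Finset.sum_congr rfl
  intro y' _
  exact if_congr (and_congr (restrict_eq_iff 𝒳 S x' x) (restrict_eq_iff 𝒳 S y' y)) rfl rfl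

lemma push' (π : (∀ i, 𝒳 i) → ℝ) (P : (∀ i, 𝒳 i) → (∀ i, 𝒳 i) → ℝ) (S : Finset (Fin d))
    (G : (∀ i : S, 𝒳 i.1) → (∀ i : S, 𝒳 i.1) → ℝ) :
    ∑ z : ∀ i : S, 𝒳 i.1, ∑ w : ∀ i : S, 𝒳 i.1, mS 𝒳 π P S z w * G z w
      = ∑ x, ∑ y, π x * P x y * G (restrict 𝒳 S x) (restrict 𝒳 S y) :=
  push 𝒳 π P S G

lemma distToStat_eq (π : (∀ i, 𝒳 i) → ℝ) (P : (∀ i, 𝒳 i) → (∀ i, 𝒳 i) → ℝ)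
    (hπpos : ∀ x, 0 < π x) (hPnonneg : ∀ x y, 0 ≤ P x y)
    (hProw : ∀ x, ∑ y, P x y = 1) (hstat : ∀ y, ∑ x, π x * P x y = π y)
    (S : Finset (Fin d)) :
    distToStat 𝒳 π P S
      = (∑ v, QQ 𝒳 π P v * Real.log (MM (fun i => 𝒳 i × 𝒳 i) (QQ 𝒳 π P) S v))
        - 2 * ∑ x, π x * Real.log (PiM 𝒳 π S x) := by
  have hmarg := marginal_pos 𝒳 π hπpos S
  have key : ∀ z w : ∀ i : S, 𝒳 i.1,
      marginal 𝒳 π S z * keepIn 𝒳 π P S z w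
          * Real.log (keepIn 𝒳 π P S z w / marginal 𝒳 π S w)
        = mS 𝒳 π P S z w * (Real.log (mS 𝒳 π P S z w) - Real.log (marginal 𝒳 π S z)
            - Real.log (marginal 𝒳 π S w)) := by
    intro z w
    rcases (mS_nonneg 𝒳 π P hπpos hPnonneg S z w).eq_or_lt with h0 | hpos
    · rw [keepIn_eq, ← h0]
      simp
    · have hz := (hmarg z).ne'
      have hw := (hmarg w).ne'
      have hmne := hpos.ne'
      have e1 : marginal 𝒳 π S z * (mS 𝒳 π P S z w / marginal 𝒳 π S z)
          = mS 𝒳 π P S z w := by field_simp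
      rw [keepIn_eq, e1, div_div, Real.log_div hmne (mul_ne_zero hz hw),
        Real.log_mul hz hw]
      ring
  have split : distToStat 𝒳 π P S
      = (∑ z, ∑ w, mS 𝒳 π P S z w * Real.log (mS 𝒳 π P S z w))
        - (∑ z, ∑ w, mS 𝒳 π P S z w * Real.log (marginal 𝒳 π S z))
        - (∑ z, ∑ w, mS 𝒳 π P S z w * Real.log (marginal 𝒳 π S w)) := by
    rw [distToStat, klRate]
    calc ∑ z, ∑ w, marginal 𝒳 π S z * keepIn 𝒳 π P S z w
          * Real.log (keepIn 𝒳 π P S z w / marginal 𝒳 π S w)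
        = ∑ z, ∑ w, mS 𝒳 π P S z w * (Real.log (mS 𝒳 π P S z w)
            - Real.log (marginal 𝒳 π S z) - Real.log (marginal 𝒳 π S w)) := by
          exact Finset.sum_congr rfl fun z _ => Finset.sum_congr rfl fun w _ => key z w
      _ = _ := by
          simp only [mul_sub, Finset.sum_sub_distrib]
  -- part A
  have partA : ∑ z, ∑ w, mS 𝒳 π P S z w * Real.log (mS 𝒳 π P S z w)
      = ∑ v, QQ 𝒳 π P v * Real.log (MM (fun i => 𝒳 i × 𝒳 i) (QQ 𝒳 π P) S v) := by
    rw [push' 𝒳 π P S (fun z w => Real.log (mS 𝒳 π P S z w)),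
      sum_pair 𝒳 (fun v => QQ 𝒳 π P v
        * Real.log (MM (fun i => 𝒳 i × 𝒳 i) (QQ 𝒳 π P) S v))]
    exact Finset.sum_congr rfl fun x _ => Finset.sum_congr rfl fun y _ => by
      rw [mS_restrict]
      rfl
  -- part B
  have partB : ∑ z, ∑ w, mS 𝒳 π P S z w * Real.log (marginal 𝒳 π S z)
      = ∑ x, π x * Real.log (PiM 𝒳 π S x) := by
    rw [push' 𝒳 π P S (fun z _ => Real.log (marginal 𝒳 π S z))]
    apply Finset.sum_congr rfl
    intro x _
    have : ∀ y : ∀ i, 𝒳 i, π x * P x y * Real.log (marginal 𝒳 π S (restrict 𝒳 S x))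
        = (π x * Real.log (PiM 𝒳 π S x)) * P x y := by
      intro y
      rw [marginal_restrict]
      ring
    rw [Finset.sum_congr rfl fun y _ => this y, ← Finset.mul_sum, hProw x, mul_one]
  -- part C
  have partC : ∑ z, ∑ w, mS 𝒳 π P S z w * Real.log (marginal 𝒳 π S w)
      = ∑ x, π x * Real.log (PiM 𝒳 π S x) := by
    rw [push' 𝒳 π P S (fun _ w => Real.log (marginal 𝒳 π S w)), Finset.sum_comm]
    apply Finset.sum_congr rfl
    intro y _
    have : ∀ x : ∀ i, 𝒳 i, π x * P x y * Real.log (marginal 𝒳 π S (restrict 𝒳 S y))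
        = (π x * P x y) * Real.log (PiM 𝒳 π S y) := by
      intro x
      rw [marginal_restrict]
    rw [Finset.sum_congr rfl fun x _ => this x, ← Finset.sum_mul, hstat y]
  rw [split, partA, partB, partC]
  ring

lemma B_split (π : (∀ i, 𝒳 i) → ℝ) (hπpos : ∀ x, 0 < π x) (hπsum : ∑ x, π x = 1)
    (hprod : ∀ x : ∀ i, 𝒳 i, π x = ∏ i, singleMarginal 𝒳 π i (x i))
    (S : Finset (Fin d)) :
    ∑ x, π x * Real.log (PiM 𝒳 π S x)
      = ∑ i ∈ S, ∑ x, π x * Real.log (singleMarginal 𝒳 π i (x i)) := by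
  have hlog : ∀ x : ∀ i, 𝒳 i, Real.log (PiM 𝒳 π S x)
      = ∑ i ∈ S, Real.log (singleMarginal 𝒳 π i (x i)) := by
    intro x
    rw [PiM_prod 𝒳 π hπsum hprod S x]
    exact Real.log_prod fun i _ => (sm_pos 𝒳 π hπpos i (x i)).ne'
  simp_rw [hlog, Finset.mul_sum]
  rw [Finset.sum_comm]

end App2

/-- If `P` is `π`-stationary and `π` is of product form
(`π = ⊗_{i=1}^d π^(i)`), then the map `S ↦ D(P^(S) ‖ Π^(S))` is supermodular. -/
theorem distToStat_supermodular_of_product_form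
    (𝒳 : Fin d → Type) [∀ i, Fintype (𝒳 i)] [∀ i, Nonempty (𝒳 i)]
    (π : (∀ i, 𝒳 i) → ℝ) (P : (∀ i, 𝒳 i) → (∀ i, 𝒳 i) → ℝ)
    (hπpos : ∀ x, 0 < π x) (hπsum : ∑ x, π x = 1)
    (hPnonneg : ∀ x y, 0 ≤ P x y) (hProw : ∀ x, ∑ y, P x y = 1)
    (hstat : ∀ y, ∑ x, π x * P x y = π y)
    (hprod : ∀ x : ∀ i, 𝒳 i, π x = ∏ i, singleMarginal 𝒳 π i (x i)) :
    ∀ S T : Finset (Fin d),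
      distToStat 𝒳 π P S + distToStat 𝒳 π P T ≤
        distToStat 𝒳 π P (S ∩ T) + distToStat 𝒳 π P (S ∪ T) := by
  intro S T
  have hQnn : ∀ v : ∀ i, 𝒳 i × 𝒳 i, 0 ≤ QQ 𝒳 π P v := fun v =>
    mul_nonneg (hπpos _).le (hPnonneg _ _)
  have hcore := core_ineq (fun i => 𝒳 i × 𝒳 i) (QQ 𝒳 π P) hQnn S T
  have hB : ∀ A : Finset (Fin d), ∑ x, π x * Real.log (PiM 𝒳 π A x)
      = ∑ i ∈ A, ∑ x, π x * Real.log (singleMarginal 𝒳 π i (x i)) :=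
    fun A => B_split 𝒳 π hπpos hπsum hprod A
  have hBmod : (∑ x, π x * Real.log (PiM 𝒳 π S x)) + (∑ x, π x * Real.log (PiM 𝒳 π T x))
      = (∑ x, π x * Real.log (PiM 𝒳 π (S ∩ T) x))
        + (∑ x, π x * Real.log (PiM 𝒳 π (S ∪ T) x)) := by
    rw [hB S, hB T, hB (S ∩ T), hB (S ∪ T), ← Finset.sum_union_inter]
    ring
  rw [distToStat_eq 𝒳 π P hπpos hPnonneg hProw hstat S,
    distToStat_eq 𝒳 π P hπpos hPnonneg hProw hstat T,
    distToStat_eq 𝒳 π P hπpos hPnonneg hProw hstat (S ∩ T),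
    distToStat_eq 𝒳 π P hπpos hPnonneg hProw hstat (S ∪ T)]
  linarith

end
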